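/- For (p,q) ∈ ℝ², there exists s ∈ ℝ with p = s² − 1 and q = −75s⁵ + (345/4)s⁴ − 29s³ + (117/2)s² − 163/4 if and only if B(p,q) = 0 and p ≥ −1. -/
import Mathlib


/-- `B(p,q) = (q − (345/4)p² − 231p − 104)² − (p + 1)³(75p + 104)²`. -/
noncomputable def B (p q : ℝ) : ℝ :=
  (q - (345 / 4) * p ^ 2 - 231 * p - 104) ^ 2 - (p + 1) ^ 3 * (75 * p + 104) ^ 2

theorem mem_pinchuk_curve_iff (p q : ℝ) :
    (∃ s : ℝ, p = s ^ 2 - 1 ∧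
        q = -75 * s ^ 5 + (345 / 4) * s ^ 4 - 29 * s ^ 3 + (117 / 2) * s ^ 2 - 163 / 4) ↔
      B p q = 0 ∧ p ≥ -1 := by
  constructor
  · rintro ⟨s, rfl, rfl⟩
    constructor
    · simp only [B]; ring
    · nlinarith [sq_nonneg s]
  · rintro ⟨hB, hp⟩
    obtain ⟨t, ht2⟩ : ∃ t : ℝ, t ^ 2 = p + 1 :=
      ⟨Real.sqrt (p + 1), Real.sq_sqrt (by linarith)⟩
    have hp' : p = t ^ 2 - 1 := by linarith
    subst hp'
    simp only [B] at hB
    have hfac : (q - (345 / 4) * (t ^ 2 - 1) ^ 2 - 231 * (t ^ 2 - 1) - 104 +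
        t ^ 3 * (75 * t ^ 2 + 29)) *
        (q - (345 / 4) * (t ^ 2 - 1) ^ 2 - 231 * (t ^ 2 - 1) - 104 -
        t ^ 3 * (75 * t ^ 2 + 29)) = 0 := by linear_combination hB
    rcases mul_eq_zero.mp hfac with h | h
    · exact ⟨t, rfl, by linear_combination h⟩
    · exact ⟨-t, by ring, by linear_combination h⟩
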